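/- Let β = log 2/log 3 and define U_n = (1/18^{ℓ(n)}) · (1/8) · (2^{ℓ(n)+1} - n + (n - 2^{ℓ(n)})/9) for n ≥ 2 with 2^{ℓ(n)} ≤ n < 2^{ℓ(n)+1}. Then lim_{n→∞} (2 log n)/(-log U_n) = β. -/

import Mathlib

open MeasureTheory Real Set Filter
open scoped ENNReal Topology

noncomputable section

/-- First generating map of the Cantor set. -/
def T1 (x : ℝ) : ℝ := x / 3

/-- Second generating map of the Cantor set. -/
def T2 (x : ℝ) : ℝ := x / 3 + 2 / 3

/-- Map indexed by `Fin 2`. -/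
def Tm : Fin 2 → ℝ → ℝ := ![T1, T2]

/-- Composition `T_σ = T_{σ₁} ∘ ⋯ ∘ T_{σ_k}` for a word over `{1,2}` (as a list over `Fin 2`). -/
def Tw (l : List (Fin 2)) : ℝ → ℝ := l.foldr (fun i g => Tm i ∘ g) id

/-- Squared Euclidean distance between `x ∈ ℝ` (identified with `(x,0)`) and `(a,b) ∈ ℝ²`. -/
def rho (x : ℝ) (p : ℝ × ℝ) : ℝ := (x - p.1) ^ 2 + p.2 ^ 2

/-- Distortion error of a set `α ⊆ ℝ²` for `P`. -/
def distortion (P : Measure ℝ) (α : Set (ℝ × ℝ)) : ℝ := ∫ x, ⨅ a : α, rho x (a : ℝ × ℝ) ∂P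

/-- The constraint `S_j = {(x, 1/j) : 0 ≤ x ≤ 1}`. -/
def Sj (j : ℕ) : Set (ℝ × ℝ) := {p | p.1 ∈ Icc (0 : ℝ) 1 ∧ p.2 = 1 / (j : ℝ)}

/-- The `n`th constrained quantization error for `P` with respect to the family `Sj`. -/
def Vc (P : Measure ℝ) (n : ℕ) : ℝ :=
  sInf {e : ℝ | ∃ α : Finset (ℝ × ℝ), α.Nonempty ∧ α.card ≤ n ∧
    (↑α : Set (ℝ × ℝ)) ⊆ ⋃ j ∈ Finset.Icc 1 n, Sj j ∧ e = distortion P (↑α : Set (ℝ × ℝ))}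

theorem constrained_dimension_hausdorff (L : ℕ → ℕ)
    (hL : ∀ n, 2 ≤ n → 2 ^ L n ≤ n ∧ n < 2 ^ (L n + 1)) (U : ℕ → ℝ)
    (hU : ∀ n, 2 ≤ n → U n =
      (1 / 18 ^ L n) * (1 / 8) * (2 ^ (L n + 1) - (n : ℝ) + ((n : ℝ) - 2 ^ L n) / 9)) :
    Tendsto (fun n : ℕ => (2 * Real.log (n : ℝ)) / (-Real.log (U n))) atTop
      (𝓝 (Real.log 2 / Real.log 3)) := by
  have hLnat : Tendsto L atTop atTop := by
    refine tendsto_atTop.2 fun M => ?_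
    filter_upwards [eventually_ge_atTop (max 2 (2 ^ M))] with n hn
    have h2 : 2 ≤ n := le_trans (le_max_left _ _) hn
    have hM : 2 ^ M ≤ n := le_trans (le_max_right _ _) hn
    have hlt : 2 ^ M < 2 ^ (L n + 1) := lt_of_le_of_lt hM (hL n h2).2
    have := (Nat.pow_lt_pow_iff_right (by norm_num : 1 < 2)).1 hlt
    omega
  have hLr : Tendsto (fun n => (L n : ℝ)) atTop atTop :=
    tendsto_natCast_atTop_atTop.comp hLnat
  have hinv : Tendsto (fun n => 1 / (L n : ℝ)) atTop (𝓝 0) := by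
    simpa [one_div, Function.comp_def] using tendsto_inv_atTop_zero.comp hLr
  set a : ℕ → ℝ := fun n => Real.log n / L n with ha_def
  set b : ℕ → ℝ := fun n => (-Real.log (U n)) / L n with hb_def
  have main : ∀ᶠ n in atTop,
      (Real.log 2 ≤ a n ∧ a n ≤ Real.log 2 + Real.log 2 * (1 / L n)) ∧
      (Real.log 9 + Real.log 8 * (1 / L n) ≤ b n ∧
        b n ≤ Real.log 9 + Real.log 72 * (1 / L n)) ∧
      (2 * Real.log n) / (-Real.log (U n)) = 2 * a n / b n := by
    filter_upwards [eventually_ge_atTop 2] with n hn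
    obtain ⟨h1, h2⟩ := hL n hn
    have hl1 : 1 ≤ L n := by
      rcases Nat.eq_zero_or_pos (L n) with h | h
      · rw [h] at h2; norm_num at h2; omega
      · exact h
    have lpos : (0 : ℝ) < L n := by exact_mod_cast hl1
    have hA : (0:ℝ) < 2 ^ L n := by positivity
    have hB : (0:ℝ) < 9 ^ L n := by positivity
    have hcast1 : (2:ℝ) ^ L n ≤ (n:ℝ) := by exact_mod_cast h1
    have hcast2 : (n:ℝ) < 2 ^ (L n + 1) := by exact_mod_cast h2
    have hcast2' : (n:ℝ) ≤ 2 * 2 ^ L n := by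
      rw [pow_succ] at hcast2; linarith
    have npos : (0:ℝ) < n := by positivity
    have hUeq : U n = (17 * 2 ^ L n - 8 * n) / (72 * (2 ^ L n * 9 ^ L n)) := by
      rw [hU n hn, show (18:ℝ) ^ L n = 2 ^ L n * 9 ^ L n by rw [← mul_pow]; norm_num,
        pow_succ]
      field_simp
      ring
    have hlow : 1 / (72 * 9 ^ L n) ≤ U n := by
      rw [hUeq, div_le_div_iff₀ (by positivity) (by positivity)]
      nlinarith [mul_nonneg hB.le (by linarith : (0:ℝ) ≤ 2 * 2 ^ L n - n)]
    have hhigh : U n ≤ 1 / (8 * 9 ^ L n) := by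
      rw [hUeq, div_le_div_iff₀ (by positivity) (by positivity)]
      nlinarith [mul_nonneg hB.le (by linarith : (0:ℝ) ≤ (n:ℝ) - 2 ^ L n)]
    have hUpos : 0 < U n := lt_of_lt_of_le (by positivity) hlow
    have hlogU_high : Real.log (U n) ≤ -(Real.log 8 + L n * Real.log 9) := by
      have h := Real.log_le_log hUpos hhigh
      rw [one_div, Real.log_inv, Real.log_mul (by norm_num) hB.ne', Real.log_pow] at h
      linarith
    have hlogU_low : -(Real.log 72 + L n * Real.log 9) ≤ Real.log (U n) := by
      have h := Real.log_le_log (by positivity) hlow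
      rw [one_div, Real.log_inv, Real.log_mul (by norm_num) hB.ne', Real.log_pow] at h
      linarith
    have hlogn_low : (L n : ℝ) * Real.log 2 ≤ Real.log n := by
      have := Real.log_le_log hA hcast1
      rwa [Real.log_pow] at this
    have hlogn_high : Real.log n ≤ ((L n : ℝ) + 1) * Real.log 2 := by
      have := Real.log_le_log npos hcast2.le
      rw [Real.log_pow] at this
      push_cast at this
      linarith
    refine ⟨⟨?_, ?_⟩, ⟨?_, ?_⟩, ?_⟩
    · rw [ha_def]
      rw [le_div_iff₀ lpos]
      linarith
    · rw [ha_def]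
      have heq : Real.log 2 + Real.log 2 * (1 / (L n : ℝ)) =
          (((L n : ℝ) + 1) * Real.log 2) / L n := by
        field_simp
      rw [heq, div_le_div_iff₀ lpos lpos]
      nlinarith
    · rw [hb_def]
      have heq : Real.log 9 + Real.log 8 * (1 / (L n : ℝ)) =
          ((L n : ℝ) * Real.log 9 + Real.log 8) / L n := by
        field_simp
      rw [heq, div_le_div_iff₀ lpos lpos]
      nlinarith
    · rw [hb_def]
      have heq : Real.log 9 + Real.log 72 * (1 / (L n : ℝ)) =
          ((L n : ℝ) * Real.log 9 + Real.log 72) / L n := by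
        field_simp
      rw [heq, div_le_div_iff₀ lpos lpos]
      nlinarith
    · rw [ha_def, hb_def]
      rw [show 2 * (Real.log n / (L n : ℝ)) = (2 * Real.log n) / L n by ring,
        div_div_div_cancel_right₀ (Nat.cast_ne_zero.2 (by omega) : (L n : ℝ) ≠ 0)]
  have haTend : Tendsto a atTop (𝓝 (Real.log 2)) := by
    refine tendsto_of_tendsto_of_tendsto_of_le_of_le' tendsto_const_nhds ?_
      (main.mono fun n h => h.1.1) (main.mono fun n h => h.1.2)
    simpa using tendsto_const_nhds.add
      ((tendsto_const_nhds : Tendsto (fun _ : ℕ => Real.log 2) atTop _).mul hinv)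
  have hbTend : Tendsto b atTop (𝓝 (Real.log 9)) := by
    refine tendsto_of_tendsto_of_tendsto_of_le_of_le' ?_ ?_
      (main.mono fun n h => h.2.1.1) (main.mono fun n h => h.2.1.2)
    · simpa using tendsto_const_nhds.add
        ((tendsto_const_nhds : Tendsto (fun _ : ℕ => Real.log 8) atTop _).mul hinv)
    · simpa using tendsto_const_nhds.add
        ((tendsto_const_nhds : Tendsto (fun _ : ℕ => Real.log 72) atTop _).mul hinv)
  have hlog9 : Real.log 9 = 2 * Real.log 3 := by
    rw [show (9:ℝ) = 3 ^ 2 by norm_num, Real.log_pow]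
    push_cast; ring
  have hlog9ne : Real.log 9 ≠ 0 := (Real.log_pos (by norm_num)).ne'
  have hfinal : Tendsto (fun n => 2 * a n / b n) atTop (𝓝 (2 * Real.log 2 / Real.log 9)) :=
    (tendsto_const_nhds.mul haTend).div hbTend hlog9ne
  have heq2 : 2 * Real.log 2 / Real.log 9 = Real.log 2 / Real.log 3 := by
    rw [hlog9]; exact mul_div_mul_left _ _ two_ne_zero
  rw [← heq2]
  exact hfinal.congr' (main.mono fun n h => h.2.2.symm)
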